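/- Let (B, Θ) be a category with nullhomotopies and (T, F) a Θ-torsion theory. Then T and F are closed under retracts: if F ∈ F and X is a retract of F, then X ∈ F, and dually for T. -/
import Mathlib


open CategoryTheory

universe w v u

/-- A structure of nullhomotopies on a category `B`: a set of nullhomotopies on each arrow,
together with associative and unital pre- and post-composition actions. -/
structure NullStruct (B : Type u) [Category.{v} B] where
  null : ∀ {X Y : B}, (X ⟶ Y) → Type w
  pre : ∀ {W X Y : B} (f : W ⟶ X) {g : X ⟶ Y}, null g → null (f ≫ g)
  post : ∀ {X Y Z : B} {g : X ⟶ Y} (h : Y ⟶ Z), null g → null (g ≫ h)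
  pre_pre : ∀ {V W X Y : B} (f' : V ⟶ W) (f : W ⟶ X) {g : X ⟶ Y} (φ : null g),
    HEq (pre (f' ≫ f) φ) (pre f' (pre f φ))
  post_post : ∀ {X Y Z Z' : B} {g : X ⟶ Y} (h : Y ⟶ Z) (h' : Z ⟶ Z') (φ : null g),
    HEq (post (h ≫ h') φ) (post h' (post h φ))
  pre_post : ∀ {W X Y Z : B} (f : W ⟶ X) {g : X ⟶ Y} (h : Y ⟶ Z) (φ : null g),
    HEq (pre f (post h φ)) (post h (pre f φ))
  pre_id : ∀ {X Y : B} {g : X ⟶ Y} (φ : null g), HEq (pre (𝟙 X) φ) φ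
  post_id : ∀ {X Y : B} {g : X ⟶ Y} (φ : null g), HEq (post (𝟙 Y) φ) φ

variable {B : Type u} [Category.{v} B]

/-- `(N, n, ν)` is a homotopy kernel of `g` with respect to `Θ`. -/
def IsHKernel (Θ : NullStruct.{w} B) {N X Y : B} (g : X ⟶ Y) (n : N ⟶ X)
    (ν : Θ.null (n ≫ g)) : Prop :=
  ∀ {W : B} (f : W ⟶ X) (φ : Θ.null (f ≫ g)),
    ∃! f' : W ⟶ N, f' ≫ n = f ∧ HEq (Θ.pre f' ν) φ

/-- `(Q, q, θ)` is a homotopy cokernel of `g` with respect to `Θ`. -/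
def IsHCokernel (Θ : NullStruct.{w} B) {X Y Q : B} (g : X ⟶ Y) (q : Y ⟶ Q)
    (θ : Θ.null (g ≫ q)) : Prop :=
  ∀ {W : B} (h : Y ⟶ W) (ψ : Θ.null (g ≫ h)),
    ∃! h' : Q ⟶ W, q ≫ h' = h ∧ HEq (Θ.post h' θ) ψ

/-- `T` is `Θ`-orthogonal to `F`: each `Θ(h)` is a singleton for `h : T ⟶ F`. -/
def NullOrth (Θ : NullStruct.{w} B) (T F : B) : Prop :=
  ∀ h : T ⟶ F, Nonempty (Θ.null h) ∧ Subsingleton (Θ.null h)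

/-- A homotopy torsion theory with respect to a structure of nullhomotopies `Θ`. -/
structure HTorsionTheory (Θ : NullStruct.{w} B) where
  T : Set B
  F : Set B
  repleteT : ∀ {X Y : B}, (X ≅ Y) → X ∈ T → Y ∈ T
  repleteF : ∀ {X Y : B}, (X ≅ Y) → X ∈ F → Y ∈ F
  pres : ∀ X : B, ∃ (TX FX : B) (t : TX ⟶ X) (f : X ⟶ FX) (ξ : Θ.null (t ≫ f)),
    TX ∈ T ∧ FX ∈ F ∧ IsHKernel Θ f t ξ ∧ IsHCokernel Θ t f ξ
  orth : ∀ {t f : B}, t ∈ T → f ∈ F → NullOrth Θ t f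

lemma null_heq {Θ : NullStruct.{w} B} {X Y : B} {g₁ g₂ : X ⟶ Y} (h : g₁ = g₂)
    (hs : Subsingleton (Θ.null g₂)) (φ₁ : Θ.null g₁) (φ₂ : Θ.null g₂) : HEq φ₁ φ₂ := by
  subst h; exact heq_of_eq (hs.elim _ _)

lemma post_heq {Θ : NullStruct.{w} B} {X Y Z : B} {g₁ g₂ : X ⟶ Y} (hg : g₁ = g₂)
    (h : Y ⟶ Z) {φ₁ : Θ.null g₁} {φ₂ : Θ.null g₂} (hφ : HEq φ₁ φ₂) :
    HEq (Θ.post h φ₁) (Θ.post h φ₂) := by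
  subst hg; rw [eq_of_heq hφ]

lemma pre_heq {Θ : NullStruct.{w} B} {W X Y : B} {g₁ g₂ : X ⟶ Y} (hg : g₁ = g₂)
    (f : W ⟶ X) {φ₁ : Θ.null g₁} {φ₂ : Θ.null g₂} (hφ : HEq φ₁ φ₂) :
    HEq (Θ.pre f φ₁) (Θ.pre f φ₂) := by
  subst hg; rw [eq_of_heq hφ]

/-- In a Θ-torsion theory, both subcategories are closed under retracts. -/
theorem stmt18 {Θ : NullStruct.{w} B} (tt : HTorsionTheory Θ) :
    (∀ F' ∈ tt.F, ∀ (X : B) (a : X ⟶ F') (b : F' ⟶ X), a ≫ b = 𝟙 X → X ∈ tt.F) ∧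
    (∀ T' ∈ tt.T, ∀ (X : B) (a : X ⟶ T') (b : T' ⟶ X), a ≫ b = 𝟙 X → X ∈ tt.T) := by
  constructor
  · -- F is closed under retracts
    intro F' hF' X a b hab
    obtain ⟨TX, FX, t, f, ξ, hTX, hFX, hker, hcoker⟩ := tt.pres X
    obtain ⟨⟨ψ₀⟩, _⟩ := tt.orth hTX hF' (t ≫ a)
    have hmor : (t ≫ a) ≫ b = t ≫ 𝟙 X := by rw [Category.assoc, hab]
    have ψ : Θ.null (t ≫ 𝟙 X) := cast (congrArg Θ.null hmor) (Θ.post b ψ₀)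
    obtain ⟨h', ⟨hfh', _⟩, _⟩ := hcoker (𝟙 X) ψ
    obtain ⟨u, _, huniq⟩ := hcoker f ξ
    have h1 : 𝟙 FX = u := huniq (𝟙 FX) ⟨Category.comp_id f, Θ.post_id ξ⟩
    have hff : f ≫ h' ≫ f = f := by rw [← Category.assoc, hfh', Category.id_comp]
    have h2 : h' ≫ f = u := by
      refine huniq (h' ≫ f) ⟨hff, ?_⟩
      exact null_heq (by rw [Category.assoc, hff]) (tt.orth hTX hFX (t ≫ f)).2 _ ξ
    have hiso : h' ≫ f = 𝟙 FX := h2.trans h1.symm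
    exact tt.repleteF (Iso.symm (⟨f, h', hfh', hiso⟩ : X ≅ FX)) hFX
  · -- T is closed under retracts
    intro T' hT' X a b hab
    obtain ⟨TX, FX, t, f, ξ, hTX, hFX, hker, hcoker⟩ := tt.pres X
    obtain ⟨⟨ψ₀⟩, _⟩ := tt.orth hT' hFX (b ≫ f)
    have hmor : a ≫ b ≫ f = 𝟙 X ≫ f := by rw [← Category.assoc, hab]
    have φ : Θ.null (𝟙 X ≫ f) := cast (congrArg Θ.null hmor) (Θ.pre a ψ₀)
    obtain ⟨u, ⟨hut, huξ⟩, _⟩ := hker (𝟙 X) φ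
    obtain ⟨v, _, huniq⟩ := hker t ξ
    have h1 : 𝟙 TX = v := huniq (𝟙 TX) ⟨Category.id_comp t, Θ.pre_id ξ⟩
    have h2 : t ≫ u = v := by
      refine huniq (t ≫ u) ⟨by rw [Category.assoc, hut, Category.comp_id], ?_⟩
      refine (Θ.pre_pre t u ξ).trans ?_
      refine HEq.trans (pre_heq (by rw [← Category.assoc, hut]) t huξ) ?_
      exact null_heq (by rw [Category.id_comp]) (tt.orth hTX hFX (t ≫ f)).2 _ ξ
    have hiso : t ≫ u = 𝟙 TX := h2.trans h1.symm
    exact tt.repleteT ((⟨t, u, hiso, hut⟩ : TX ≅ X)) hTX
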